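/- Assume p_{0,2} < κ < p_{0,1} and u_{0,2} < u_{0,1} satisfy (p_{0,1} − p_{0,2})(𝒯^i(p_{0,2}) − 1) = (u_{0,1} − u_{0,2})², and set λ̄₂ = −(u_{0,2} − u_{0,1})/(𝒯^i(p_{0,2}) − 1). Then λ̄₂ > 0 and the piecewise constant function (p^ref, u^ref)(t,x) equal to (p_{0,1}, u_{0,1}) for x < λ̄₂ t and to (p_{0,2}, u_{0,2}) for x > λ̄₂ t is a weak distributional solution of the hard-congestion p-system on (0,∞) × ℝ: for every test function φ ∈ C¹_c((0,∞) × ℝ), ∬ (𝒯(p^ref) ∂_t φ − u^ref ∂_x φ) dx dt = 0 and ∬ (u^ref ∂_t φ + p^ref ∂_x φ) dx dt = 0. -/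

import Mathlib

open Set Filter MeasureTheory Topology

/-- The limit specific-volume law `𝒯(p) = (κ/p)^{1/γᵢ}` for `p < κ` and `1` for `p ≥ κ`. -/
noncomputable def Tlim (κ γi p : ℝ) : ℝ := if p < κ then (κ / p) ^ (1 / γi) else 1

lemma sliceFst {f : ℝ × ℝ → ℝ} (hf : HasCompactSupport f) (y : ℝ) :
    HasCompactSupport (fun t => f (t, y)) := by
  apply HasCompactSupport.intro (hf.isCompact.image continuous_fst)
  intro t ht
  by_contra h
  exact ht ⟨(t, y), subset_tsupport f h, rfl⟩

lemma sliceSnd {f : ℝ × ℝ → ℝ} (hf : HasCompactSupport f) (t : ℝ) :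
    HasCompactSupport (fun y => f (t, y)) := by
  apply HasCompactSupport.intro (hf.isCompact.image continuous_snd)
  intro y hy
  by_contra h
  exact hy ⟨(t, y), subset_tsupport f h, rfl⟩

lemma shearCS {f : ℝ × ℝ → ℝ} (hf : HasCompactSupport f) (lam : ℝ) :
    HasCompactSupport (fun q : ℝ × ℝ => f (q.1, q.2 + lam * q.1)) := by
  apply HasCompactSupport.intro
    (hf.isCompact.image (by fun_prop : Continuous fun q : ℝ × ℝ => (q.1, q.2 - lam * q.1)))
  intro q hq
  by_contra h
  refine hq ⟨(q.1, q.2 + lam * q.1), subset_tsupport f h, ?_⟩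
  simp

lemma fderivApplyCS {f : ℝ × ℝ → ℝ} (hf : HasCompactSupport f) (v : ℝ × ℝ) :
    HasCompactSupport (fun q => fderiv ℝ f q v) := by
  apply HasCompactSupport.intro (hf.fderiv ℝ).isCompact
  intro q hq
  have : fderiv ℝ f q = 0 := image_eq_zero_of_notMem_tsupport hq
  simp [this]

lemma fderivApplyCont {f : ℝ × ℝ → ℝ} (hf : ContDiff ℝ 1 f) (v : ℝ × ℝ) :
    Continuous (fun q => fderiv ℝ f q v) :=
  ((ContinuousLinearMap.apply ℝ ℝ v).continuous).comp (hf.continuous_fderiv one_ne_zero)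

lemma key (lam a b c d : ℝ) (habcd : c - lam * a = d - lam * b)
    (φ : ℝ × ℝ → ℝ) (hφ : ContDiff ℝ 1 φ) (hcs : HasCompactSupport φ) :
    (∫ q : ℝ × ℝ, ((if q.2 < lam * q.1 then a else b) * fderiv ℝ φ q (1, 0)
      + (if q.2 < lam * q.1 then c else d) * fderiv ℝ φ q (0, 1))) = 0 := by
  set W : ℝ × ℝ → ℝ := fun q => fderiv ℝ φ q (1, lam) with hWdef
  set H : ℝ × ℝ → ℝ := fun q => fderiv ℝ φ q (0, 1) with hHdef
  have hWsplit : ∀ q : ℝ × ℝ, W q = fderiv ℝ φ q (1, 0) + lam * H q := by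
    intro q
    have hv : ((1 : ℝ), lam) = (1, 0) + lam • ((0 : ℝ), (1 : ℝ)) := by
      simp [Prod.ext_iff]
    simp only [hWdef, hHdef, hv, map_add, ContinuousLinearMap.map_smul, smul_eq_mul]
  -- continuity and support facts
  have hWc : Continuous W := fderivApplyCont hφ _
  have hHc : Continuous H := fderivApplyCont hφ _
  have hWcs : HasCompactSupport W := fderivApplyCS hcs _
  have hHcs : HasCompactSupport H := fderivApplyCS hcs _
  have hWint : Integrable W := hWc.integrable_of_hasCompactSupport hWcs
  have hHint : Integrable H := hHc.integrable_of_hasCompactSupport hHcs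
  have hmeas : AEStronglyMeasurable (fun q : ℝ × ℝ => if q.2 < lam * q.1 then a else b) volume :=
    (Measurable.ite (measurableSet_lt measurable_snd (measurable_const.mul measurable_fst))
      measurable_const measurable_const).aestronglyMeasurable
  have hbdd : ∀ (x y : ℝ), ∃ C, ∀ q : ℝ × ℝ, ‖if q.2 < lam * q.1 then x else y‖ ≤ C := by
    intro x y
    refine ⟨max ‖x‖ ‖y‖, fun q => ?_⟩
    by_cases h : q.2 < lam * q.1 <;> simp [h, le_max_left, le_max_right]
  have hχWint : Integrable (fun q : ℝ × ℝ => (if q.2 < lam * q.1 then a else b) * W q) :=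
    hWint.bdd_mul hmeas (Filter.Eventually.of_forall (hbdd a b).choose_spec)
  -- pointwise rewriting
  have hpt : ∀ q : ℝ × ℝ,
      (if q.2 < lam * q.1 then a else b) * fderiv ℝ φ q (1, 0)
        + (if q.2 < lam * q.1 then c else d) * fderiv ℝ φ q (0, 1)
      = (if q.2 < lam * q.1 then a else b) * W q + (c - lam * a) * H q := by
    intro q
    have h1 : fderiv ℝ φ q (1, 0) = W q - lam * H q := by rw [hWsplit q]; ring
    by_cases h : q.2 < lam * q.1
    · simp only [h, if_true, h1]; ring
    · simp only [h, if_false, h1, hHdef]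
      rw [habcd]; ring
  simp only [hpt]
  rw [integral_add hχWint (hHint.const_mul _)]
  have hH0 : (∫ q : ℝ × ℝ, (c - lam * a) * H q) = 0 := by
    rw [integral_const_mul]
    have : (∫ q : ℝ × ℝ, H q) = 0 := by
      rw [Measure.volume_eq_prod ℝ ℝ, integral_prod _
        (by rwa [← Measure.volume_eq_prod ℝ ℝ])]
      have inner : ∀ t : ℝ, (∫ y : ℝ, H (t, y)) = 0 := by
        intro t
        apply integral_eq_zero_of_hasDerivAt_of_integrable
          (f := fun y => φ (t, y))
        · intro y
          have hp : HasDerivAt (fun y : ℝ => (t, y)) ((0 : ℝ), (1 : ℝ)) y :=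
            (hasDerivAt_const y t).prodMk (hasDerivAt_id y)
          exact ((hφ.differentiable one_ne_zero (t, y)).hasFDerivAt).comp_hasDerivAt y hp
        · exact (hHc.comp (by fun_prop)).integrable_of_hasCompactSupport (sliceSnd hHcs t)
        · exact (hφ.continuous.comp (by fun_prop)).integrable_of_hasCompactSupport
            (sliceSnd hcs t)
      simp [inner]
    rw [this, mul_zero]
  rw [hH0, add_zero]
  -- main shear argument
  rw [Measure.volume_eq_prod ℝ ℝ, integral_prod _
    (by rwa [← Measure.volume_eq_prod ℝ ℝ])]
  have step2 : ∀ t : ℝ, (∫ x : ℝ, (if x < lam * t then a else b) * W (t, x))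
      = ∫ y : ℝ, (if y < 0 then a else b) * W (t, y + lam * t) := by
    intro t
    rw [← integral_add_right_eq_self (fun x : ℝ => (if x < lam * t then a else b) * W (t, x))
      (lam * t)]
    congr 1
    ext y
    congr 2
    simp [add_lt_iff_neg_left]
  simp only [step2]
  set G : ℝ × ℝ → ℝ := fun q => (if q.2 < 0 then a else b) * W (q.1, q.2 + lam * q.1)
    with hGdef
  have hGint : Integrable G := by
    have hWL : Integrable (fun q : ℝ × ℝ => W (q.1, q.2 + lam * q.1)) :=
      (hWc.comp (by fun_prop)).integrable_of_hasCompactSupport (shearCS hWcs lam)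
    refine hWL.bdd_mul (c := max ‖a‖ ‖b‖) ?_ ?_
    · exact (Measurable.ite (measurableSet_lt measurable_snd measurable_const)
        measurable_const measurable_const).aestronglyMeasurable
    · refine Filter.Eventually.of_forall (fun q => ?_)
      by_cases h : q.2 < 0 <;> simp [h, le_max_left, le_max_right]
  have hswap := integral_integral_swap (f := fun t y => G (t, y))
    (by rwa [← Measure.volume_eq_prod ℝ ℝ] :
      Integrable (Function.uncurry fun t y => G (t, y)) (volume.prod volume))
  simp only [hGdef] at hswap
  rw [hswap]
  have inner0 : ∀ y : ℝ, (∫ t : ℝ, (if y < 0 then a else b) * W (t, y + lam * t)) = 0 := by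
    intro y
    rw [integral_const_mul]
    have : (∫ t : ℝ, W (t, y + lam * t)) = 0 := by
      apply integral_eq_zero_of_hasDerivAt_of_integrable
        (f := fun t => φ (t, y + lam * t))
      · intro t
        have hp : HasDerivAt (fun t : ℝ => (t, y + lam * t)) ((1 : ℝ), lam) t := by
          refine (hasDerivAt_id t).prodMk ?_
          simpa using (((hasDerivAt_id t).const_mul lam).const_add y)
        exact ((hφ.differentiable one_ne_zero (t, y + lam * t)).hasFDerivAt).comp_hasDerivAt t hp
      · exact (hWc.comp (by fun_prop)).integrable_of_hasCompactSupport
          (sliceFst (shearCS hWcs lam) y)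
      · exact (hφ.continuous.comp (by fun_prop)).integrable_of_hasCompactSupport
          (sliceFst (shearCS hcs lam) y)
    rw [this, mul_zero]
  simp only [ite_mul] at inner0
  simp [inner0]

/-- The single propagating 2-shock interface: the piecewise constant function equal to
the congested state `(p₀₁,u₀₁)` for `x < λ̄₂ t` and to the free state `(p₀₂,u₀₂)` for
`x > λ̄₂ t` travels with positive speed `λ̄₂` and is a weak distributional solution of the
hard-congestion p-system `∂ₜ 𝒯(p) − ∂ₓ u = 0`, `∂ₜ u + ∂ₓ p = 0` on `(0,∞) × ℝ`. -/
theorem stmt10 (κ γi γc p01 p02 u01 u02 : ℝ)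
    (hκ : 0 < κ) (hγi : 1 < γi) (hγc : 1 < γc)
    (hp02 : 0 < p02) (h1 : p02 < κ) (h2 : κ < p01) (hu : u02 < u01)
    (hRH : (p01 - p02) * ((κ / p02) ^ (1 / γi) - 1) = (u01 - u02) ^ 2)
    (lam2 : ℝ) (hlam2 : lam2 = -(u02 - u01) / ((κ / p02) ^ (1 / γi) - 1)) :
    0 < lam2 ∧
    ∀ φ : ℝ × ℝ → ℝ, ContDiff ℝ 1 φ → HasCompactSupport φ →
      tsupport φ ⊆ (Ioi (0:ℝ)) ×ˢ (univ : Set ℝ) →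
      (∫ q : ℝ × ℝ,
        (Tlim κ γi (if q.2 < lam2 * q.1 then p01 else p02) * fderiv ℝ φ q (1, 0)
          - (if q.2 < lam2 * q.1 then u01 else u02) * fderiv ℝ φ q (0, 1))) = 0 ∧
      (∫ q : ℝ × ℝ,
        ((if q.2 < lam2 * q.1 then u01 else u02) * fderiv ℝ φ q (1, 0)
          + (if q.2 < lam2 * q.1 then p01 else p02) * fderiv ℝ φ q (0, 1))) = 0 := by
  set T2 : ℝ := (κ / p02) ^ (1 / γi) with hT2def
  have hT2 : 1 < T2 := by
    rw [hT2def]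
    have h01 : (1:ℝ) < κ / p02 := (one_lt_div hp02).mpr h1
    exact Real.one_lt_rpow_iff_of_pos (lt_trans one_pos h01) |>.mpr
      (Or.inl ⟨h01, by positivity⟩)
  have hT2ne : T2 - 1 ≠ 0 := ne_of_gt (sub_pos.mpr hT2)
  have hlam2' : lam2 * (T2 - 1) = u01 - u02 := by
    rw [hlam2]; field_simp; ring
  have hlampos : 0 < lam2 := by
    rw [hlam2]
    apply div_pos (by linarith) (by linarith)
  refine ⟨hlampos, fun φ hφ hcs _ => ⟨?_, ?_⟩⟩
  · have hrw : ∀ q : ℝ × ℝ,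
        Tlim κ γi (if q.2 < lam2 * q.1 then p01 else p02) * fderiv ℝ φ q (1, 0)
          - (if q.2 < lam2 * q.1 then u01 else u02) * fderiv ℝ φ q (0, 1)
        = (if q.2 < lam2 * q.1 then 1 else T2) * fderiv ℝ φ q (1, 0)
          + (if q.2 < lam2 * q.1 then -u01 else -u02) * fderiv ℝ φ q (0, 1) := by
      intro q
      have hT01 : Tlim κ γi p01 = 1 := if_neg (not_lt.mpr h2.le)
      have hT02 : Tlim κ γi p02 = T2 := if_pos h1
      by_cases hq : q.2 < lam2 * q.1
      · simp only [hq, if_true, hT01]; ring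
      · simp only [hq, if_false, hT02]; ring
    simp only [hrw]
    apply key lam2 1 T2 (-u01) (-u02) (by nlinarith [hlam2']) φ hφ hcs
  · apply key lam2 u01 u02 p01 p02 ?_ φ hφ hcs
    have h3 : lam2 * (u01 - u02) * (T2 - 1) = (p01 - p02) * (T2 - 1) := by
      rw [hRH]; nlinarith [hlam2']
    have h4 : lam2 * (u01 - u02) = p01 - p02 := mul_right_cancel₀ hT2ne h3
    linarith
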